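/- Let K be a field of characteristic zero and let t ∈ K. For every pair (x, y) ∈ K × K satisfying y² = (P(x)² − (1 − t))·(P(x) − 1), the pair (s, w) = (P(x)², y·P(x)·(2x − 1)) satisfies w² = s·(s − 1)·(s − (1 − t)). (This is the degree-4 origami covering π = ι ∘ π₁ : X_t → E_t of the two-steps origami 𝒮₂, as in Proposition 4.2; in particular π factors through the intermediate curve E₁,t.) -/
import Mathlib


/-- Proposition 4.2, the degree-4 origami covering `π = ι ∘ π₁ : X_t → E_t` of
the two-steps origami `𝒮₂`: with `P(x) = 4x(x−1)`, every point `(x,y)` of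
`y² = (P(x)² − (1−t))·(P(x) − 1)` maps under
`(x,y) ↦ (P(x)², y·P(x)·(2x−1))` to a point of `w² = s(s−1)(s−(1−t))`. -/
theorem stmt_5 (K : Type*) [Field K] [CharZero K] (t : K) (x y : K)
    (h : y ^ 2 = ((4 * x * (x - 1)) ^ 2 - (1 - t)) * (4 * x * (x - 1) - 1)) :
    (y * (4 * x * (x - 1)) * (2 * x - 1)) ^ 2 =
      (4 * x * (x - 1)) ^ 2 * ((4 * x * (x - 1)) ^ 2 - 1) *
        ((4 * x * (x - 1)) ^ 2 - (1 - t)) := by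
  linear_combination ((4 * x * (x - 1)) * (2 * x - 1)) ^ 2 * h
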